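/- For every k ≥ 2 and r ≥ 1, the complete k-partite graph K_{r,...,r} with all k parts of size r satisfies dim_ms(K_{r,...,r}) = kr - 1. -/

import Mathlib

open SimpleGraph

/-- The multiset representation of `u` with respect to `S`: the multiset of
distances from `u` to the vertices of `S`, counted with multiplicity. -/
noncomputable def mrep {V : Type*} (G : SimpleGraph V) (u : V) (S : Finset V) : Multiset ℕ :=
  S.val.map fun w => G.dist u w

/-- `S` is an outer multiset resolving set of `G`: the multiset representations of
the vertices outside `S` are pairwise distinct. -/
def IsOMR {V : Type*} (G : SimpleGraph V) (S : Finset V) : Prop :=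
  ∀ u ∉ S, ∀ v ∉ S, mrep G u S = mrep G v S → u = v

/-- The outer multiset dimension of `G`. -/
noncomputable def dimMS {V : Type*} (G : SimpleGraph V) [Fintype V] : ℕ :=
  sInf {n | ∃ S : Finset V, S.card = n ∧ IsOMR G S}

/-- The diameter of `G`: the largest distance between vertices of `G`. -/
noncomputable def gdiam {V : Type*} (G : SimpleGraph V) [Fintype V] : ℕ :=
  Finset.univ.sup fun p : V × V => G.dist p.1 p.2

section aux
variable (k r : ℕ)

abbrev Vkr := (i : Fin k) × Fin r

lemma dist_eq_one {u w : Vkr k r} (h : u.1 ≠ w.1) :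
    (completeMultipartiteGraph fun _ : Fin k => Fin r).dist u w = 1 := by
  rw [SimpleGraph.dist_eq_one_iff_adj]
  exact h

lemma dist_eq_two (hk : 2 ≤ k) {u w : Vkr k r} (hne : u ≠ w) (h : u.1 = w.1) :
    (completeMultipartiteGraph fun _ : Fin k => Fin r).dist u w = 2 := by
  set G := (completeMultipartiteGraph fun _ : Fin k => Fin r)
  have hj : ∃ j : Fin k, j ≠ u.1 := by
    by_cases h0 : u.1 = ⟨0, by omega⟩
    · exact ⟨⟨1, by omega⟩, by rw [h0]; intro hc; exact absurd (congrArg Fin.val hc) (by simp)⟩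
    · exact ⟨⟨0, by omega⟩, fun hc => h0 hc.symm⟩
  obtain ⟨j, hj⟩ := hj
  have hrpos : 0 < r := by
    have := u.2.2; omega
  set x : Vkr k r := ⟨j, ⟨0, hrpos⟩⟩ with hx
  have hadj1 : G.Adj u x := by
    simp only [G, completeMultipartiteGraph, comap_adj, top_adj]
    exact fun hc => hj hc.symm
  have hadj2 : G.Adj x w := by
    simp only [G, completeMultipartiteGraph, comap_adj, top_adj]
    rw [← h]
    exact hj
  have hwalk : G.Walk u w := (hadj1.toWalk).append hadj2.toWalk
  have hle : G.dist u w ≤ 2 := by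
    have := G.dist_le ((hadj1.toWalk).append hadj2.toWalk)
    simpa using this
  have hreach : G.Reachable u w := ⟨hwalk⟩
  have h0 : G.dist u w ≠ 0 := by
    rw [ne_eq, SimpleGraph.dist_eq_zero_iff_eq_or_not_reachable]
    push_neg
    exact ⟨hne, hreach⟩
  have h1 : G.dist u w ≠ 1 := by
    rw [ne_eq, SimpleGraph.dist_eq_one_iff_adj]
    simp only [G, completeMultipartiteGraph, comap_adj, top_adj]
    exact fun hc => hc h
  omega

lemma mrep_formula (hk : 2 ≤ k) (S : Finset (Vkr k r)) (u : Vkr k r) (hu : u ∉ S) :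
    mrep (completeMultipartiteGraph fun _ : Fin k => Fin r) u S =
      Multiset.replicate (S.filter fun w => w.1 = u.1).card 2 +
        Multiset.replicate (S.card - (S.filter fun w => w.1 = u.1).card) 1 := by
  classical
  set G := (completeMultipartiteGraph fun _ : Fin k => Fin r)
  unfold mrep
  have hsplit : S.val.filter (fun w => w.1 = u.1) + S.val.filter (fun w => ¬ w.1 = u.1)
      = S.val := Multiset.filter_add_not _ _
  rw [← hsplit, Multiset.map_add]
  congr 1
  · rw [Multiset.map_congr rfl (fun w hw => ?_), Multiset.map_const']
    · rfl
    · have hw' := Multiset.mem_filter.mp hw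
      exact dist_eq_two k r hk (fun he => hu (he ▸ hw'.1)) hw'.2.symm
  · rw [Multiset.map_congr rfl (fun w hw => ?_), Multiset.map_const']
    · congr 1
      have hsum := Finset.card_filter_add_card_filter_not (s := S)
        (p := fun w : Vkr k r => w.1 = u.1)
      show (S.filter (fun w => ¬ w.1 = u.1)).card = _
      omega
    · have hw' := Multiset.mem_filter.mp hw
      exact dist_eq_one k r (fun he => hw'.2 he.symm)

lemma part_card (i : Fin k) :
    (Finset.univ.filter fun w : Vkr k r => w.1 = i).card = r := by
  classical
  have : (Finset.univ.filter fun w : Vkr k r => w.1 = i) =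
      Finset.univ.map ⟨fun j : Fin r => (⟨i, j⟩ : Vkr k r), by
        intro a b h; simpa using h⟩ := by
    ext ⟨a, b⟩
    simp [Sigma.ext_iff, eq_comm]
    exact ⟨fun h => ⟨b, h.symm, rfl⟩, fun ⟨_, h, _⟩ => h.symm⟩
  rw [this]
  simp

end aux

theorem stmt_5 (k r : ℕ) (hk : 2 ≤ k) (hr : 1 ≤ r) :
    dimMS (completeMultipartiteGraph fun _ : Fin k => Fin r) = k * r - 1 := by
  classical
  set G := (completeMultipartiteGraph fun _ : Fin k => Fin r) with hG
  have hcardV : Fintype.card (Vkr k r) = k * r := by simp [Vkr, mul_comm]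
  -- membership
  have hu0 : (⟨⟨0, by omega⟩, ⟨0, by omega⟩⟩ : Vkr k r) ∈ (Finset.univ : Finset (Vkr k r)) :=
    Finset.mem_univ _
  set u₀ : Vkr k r := ⟨⟨0, by omega⟩, ⟨0, by omega⟩⟩
  have hmem : (k * r - 1) ∈ {n | ∃ S : Finset (Vkr k r), S.card = n ∧ IsOMR G S} := by
    refine ⟨Finset.univ.erase u₀, ?_, ?_⟩
    · rw [Finset.card_erase_of_mem (Finset.mem_univ _), Finset.card_univ, hcardV]
    · intro u hu v hv _
      have hu' : u = u₀ := by
        by_contra hne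
        exact hu (Finset.mem_erase.mpr ⟨hne, Finset.mem_univ _⟩)
      have hv' : v = u₀ := by
        by_contra hne
        exact hv (Finset.mem_erase.mpr ⟨hne, Finset.mem_univ _⟩)
      rw [hu', hv']
  -- lower bound
  have key : ∀ S : Finset (Vkr k r), IsOMR G S → k * r - 1 ≤ S.card := by
    intro S hS
    by_contra hlt
    push_neg at hlt
    have hcompl : 2 ≤ Sᶜ.card := by
      rw [Finset.card_compl, hcardV]
      omega
    obtain ⟨u, hu, v, hv, huv⟩ := Finset.one_lt_card.mp hcompl
    rw [Finset.mem_compl] at hu hv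
    by_cases hcase : ∃ a ∉ S, ∃ b ∉ S, a ≠ b ∧ a.1 = b.1
    · obtain ⟨a, ha, b, hb, hab, hpart⟩ := hcase
      have heq : mrep G a S = mrep G b S := by
        rw [hG, mrep_formula k r hk S a ha, mrep_formula k r hk S b hb, hpart]
      exact hab (hS a ha b hb heq)
    · push_neg at hcase
      have hpartne : u.1 ≠ v.1 := hcase u hu v hv huv
      have hcount : ∀ w : Vkr k r, w ∉ S →
          (S.filter fun x => x.1 = w.1).card = r - 1 := by
        intro w hw
        have hsub : (Finset.univ.filter fun x : Vkr k r => x.1 = w.1).filter (fun x => x ∉ S)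
            = {w} := by
          ext x
          simp only [Finset.mem_filter, Finset.mem_univ, true_and, Finset.mem_singleton]
          constructor
          · rintro ⟨hx1, hx2⟩
            by_contra hne
            exact hcase x hx2 w hw hne hx1
          · rintro rfl; exact ⟨rfl, hw⟩
        have heqS : (S.filter fun x => x.1 = w.1) =
            (Finset.univ.filter fun x : Vkr k r => x.1 = w.1).filter (fun x => x ∈ S) := by
          ext x
          simp only [Finset.mem_filter, Finset.mem_univ, true_and]
          tauto
        have hsum := Finset.card_filter_add_card_filter_not
          (s := Finset.univ.filter fun x : Vkr k r => x.1 = w.1)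
          (p := fun x => x ∈ S)
        rw [part_card] at hsum
        have h1 : ((Finset.univ.filter fun x : Vkr k r => x.1 = w.1).filter
            (fun x => ¬ x ∈ S)).card = 1 := by
          rw [show ((Finset.univ.filter fun x : Vkr k r => x.1 = w.1).filter
            (fun x => ¬ x ∈ S)) = {w} from hsub]
          simp
        rw [heqS]
        omega
      have heq : mrep G u S = mrep G v S := by
        rw [hG, mrep_formula k r hk S u hu, mrep_formula k r hk S v hv,
          hcount u hu, hcount v hv]
      exact huv (hS u hu v hv heq)
  -- conclude
  unfold dimMS
  apply le_antisymm
  · exact Nat.sInf_le hmem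
  · obtain ⟨S, hScard, hSomr⟩ := Nat.sInf_mem ⟨_, hmem⟩
    rw [← hScard]
    exact key S hSomr
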